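/- Let d ≥ 3 and let λ = 4k for some integer 1 ≤ k ≤ d-1 (a hyperbolic threshold). Let M_λ = {ξ ∈ [-1/2, 1/2)^d : h₀(ξ) = λ}. Then ∫_{M_λ} |∇h₀(ξ)|^{-1} dH^{d-1}(ξ) < ∞, where H^{d-1} is the (d-1)-dimensional Hausdorff measure; in particular, the set Σ_λ = {ξ ∈ M_λ : ∇h₀(ξ) = 0} (which is finite) has measure zero both for H^{d-1} restricted to M_λ and for the measure dμ = |∇h₀|^{-1} dH^{d-1} on M_λ. -/

import Mathlib

open MeasureTheory Real
open scoped NNReal ENNReal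

/-- The symbol `h₀(ξ) = 4 ∑_j sin²(π ξ_j)` of the discrete Laplacian. -/
noncomputable def h0E {d : ℕ} (ξ : EuclideanSpace ℝ (Fin d)) : ℝ :=
  4 * ∑ j, Real.sin (Real.pi * ξ j) ^ 2

/-- The gradient `∇h₀(ξ) = 2π(sin(2πξ_1), ..., sin(2πξ_d))`. -/
noncomputable def gradh0 {d : ℕ} (ξ : EuclideanSpace ℝ (Fin d)) :
    EuclideanSpace ℝ (Fin d) :=
  WithLp.toLp 2 (fun j => 2 * Real.pi * Real.sin (2 * Real.pi * ξ j))

/-- The level set `M_λ = {ξ ∈ [-1/2,1/2)^d : h₀(ξ) = λ}`. -/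
def Mlevel (d : ℕ) (lam : ℝ) : Set (EuclideanSpace ℝ (Fin d)) :=
  {ξ | (∀ j, -(1 / 2 : ℝ) ≤ ξ j ∧ ξ j < 1 / 2) ∧ h0E ξ = lam}

/-- The critical set `Σ_λ = {ξ ∈ M_λ : ∇h₀(ξ) = 0}`. -/
def SigmaLevel (d : ℕ) (lam : ℝ) : Set (EuclideanSpace ℝ (Fin d)) :=
  {ξ ∈ Mlevel d lam | gradh0 ξ = 0}

noncomputable def tOf (m : Fin 4) (x : ℝ) : ℝ :=
  match m with | 0 => x + 1/2 | 1 => -x | 2 => x | 3 => 1/2 - x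
noncomputable def czero (m : Fin 4) : ℝ :=
  match m with | 0 => -(1/2) | 1 => 0 | 2 => 0 | 3 => 1/2
noncomputable def IqL (m : Fin 4) : ℝ :=
  match m with | 0 => -(1/2) | 1 => -(1/4) | 2 => 0 | 3 => 1/4

lemma abs_sub_czero (m : Fin 4) {x : ℝ} (h1 : IqL m ≤ x) (h2 : x ≤ IqL m + 1/4) :
    |x - czero m| = tOf m x := by
  fin_cases m <;> simp only [tOf, czero, IqL] at * <;> norm_num at *
  · linarith
  · linarith
  · linarith
  · rw [abs_of_nonpos (by linarith)]; ring
lemma tOf_nonneg (m : Fin 4) {x : ℝ} (h1 : IqL m ≤ x) (h2 : x ≤ IqL m + 1/4) :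
    0 ≤ tOf m x := by
  fin_cases m <;> simp only [tOf, IqL] at * <;> norm_num at * <;> linarith
lemma tOf_le (m : Fin 4) {x : ℝ} (h1 : IqL m ≤ x) (h2 : x ≤ IqL m + 1/4) :
    tOf m x ≤ 1/4 := by
  fin_cases m <;> simp only [tOf, IqL] at * <;> norm_num at * <;> linarith
lemma tOf_inj (m : Fin 4) {x y : ℝ} (h : tOf m x = tOf m y) : x = y := by
  fin_cases m <;> simp only [tOf] at h <;> linarith

lemma sin_sq_sub (a b : ℝ) :
    sin (π*a)^2 - sin (π*b)^2 = sin (π*(a-b)) * sin (π*(a+b)) := by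
  have h1 := Real.cos_sub_cos (2*(π*b)) (2*(π*a))
  have e1 : (2*(π*b)+2*(π*a))/2 = π*(a+b) := by ring
  have e2 : (2*(π*b)-2*(π*a))/2 = -(π*(a-b)) := by ring
  rw [e1, e2, Real.sin_neg] at h1
  have s1 : Real.sin (π*a)^2 = 1/2 - Real.cos (2*(π*a))/2 := by
    have h2 := Real.cos_sq (π*a); have h3 := Real.sin_sq (π*a); linarith
  have s2 : Real.sin (π*b)^2 = 1/2 - Real.cos (2*(π*b))/2 := by
    have h2 := Real.cos_sq (π*b); have h3 := Real.sin_sq (π*b); linarith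
  linear_combination s1 - s2 + h1/2

lemma sin_pi_lb {s : ℝ} (h0 : 0 ≤ s) (h1 : s ≤ 1/2) : 2*s ≤ sin (π*s) := by
  have h2 := Real.mul_le_sin (x := π*s) (by positivity)
    (by nlinarith [Real.pi_pos])
  calc 2*s = 2/π*(π*s) := by field_simp
    _ ≤ sin (π*s) := h2

lemma sin_pi_ub {s : ℝ} (h0 : 0 ≤ s) : sin (π*s) ≤ π*s :=
  Real.sin_le (by positivity)

lemma sin_pi_nonneg {s : ℝ} (h0 : 0 ≤ s) (h1 : s ≤ 1) : 0 ≤ sin (π*s) :=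
  Real.sin_nonneg_of_nonneg_of_le_pi (by positivity)
    (by nlinarith [Real.pi_pos])

lemma abs_sin_add (m : Fin 4) {x y : ℝ} (hx1 : IqL m ≤ x) (hx2 : x ≤ IqL m + 1/4)
    (hy1 : IqL m ≤ y) (hy2 : y ≤ IqL m + 1/4) :
    |sin (π*(x+y))| = sin (π*(tOf m x + tOf m y)) := by
  fin_cases m <;> simp only [tOf, IqL] at * <;> norm_num at *
  · rw [show π*(x+y) = π*(x + 1/2 + (y + 1/2)) - π by ring, Real.sin_sub_pi, abs_neg,
      abs_of_nonneg (sin_pi_nonneg (by linarith) (by linarith))]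
  · rw [show π*(x+y) = -(π*(-x + -y)) by ring, Real.sin_neg, abs_neg,
      abs_of_nonneg (sin_pi_nonneg (by linarith) (by linarith))]
  · exact sin_pi_nonneg (by linarith) (by linarith)
  · rw [show π*(x+y) = π - π*(1/2 - x + (1/2 - y)) by ring, Real.sin_pi_sub,
      abs_of_nonneg (sin_pi_nonneg (by linarith) (by linarith))]

lemma abs_sin_abs {u : ℝ} (h0 : -1 ≤ u) (h1 : u ≤ 1) : |sin (π*u)| = sin (π*|u|) := by
  rcases abs_cases u with ⟨e, h2⟩ | ⟨e, h2⟩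
  · rw [e, abs_of_nonneg (sin_pi_nonneg h2 h1)]
  · rw [e, show π*u = -(π*(-u)) by ring, Real.sin_neg, abs_neg,
      abs_of_nonneg (sin_pi_nonneg (by linarith) (by linarith))]

lemma coord_est (m : Fin 4) {x y : ℝ} (hx1 : IqL m ≤ x) (hx2 : x ≤ IqL m + 1/4)
    (hy1 : IqL m ≤ y) (hy2 : y ≤ IqL m + 1/4) :
    4*(|x-y| * (tOf m x + tOf m y)) ≤ |sin (π*x)^2 - sin (π*y)^2| ∧
    |sin (π*x)^2 - sin (π*y)^2| ≤ π^2*(|x-y| * (tOf m x + tOf m y)) := by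
  have hu0 : (0:ℝ) ≤ |x-y| := abs_nonneg _
  have hu1 : |x-y| ≤ 1/2 := by rw [abs_le]; constructor <;> linarith
  have ht0 : 0 ≤ tOf m x + tOf m y := by
    have := tOf_nonneg m hx1 hx2; have := tOf_nonneg m hy1 hy2; linarith
  have ht1 : tOf m x + tOf m y ≤ 1/2 := by
    have := tOf_le m hx1 hx2; have := tOf_le m hy1 hy2; linarith
  rw [sin_sq_sub, abs_mul, abs_sin_add m hx1 hx2 hy1 hy2,
    abs_sin_abs (by linarith) (by linarith)]
  constructor
  · calc 4*(|x-y| * (tOf m x + tOf m y)) = (2*|x-y|)*(2*(tOf m x + tOf m y)) := by ring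
      _ ≤ sin (π * |x-y|) * sin (π*(tOf m x + tOf m y)) := by
          apply mul_le_mul (sin_pi_lb hu0 (by linarith)) (sin_pi_lb ht0 ht1)
            (by linarith) (le_trans (by linarith) (sin_pi_lb hu0 (by linarith)))
  · calc sin (π * |x-y|) * sin (π*(tOf m x + tOf m y)) ≤ (π * |x-y|)*(π*(tOf m x + tOf m y)) := by
          apply mul_le_mul (sin_pi_ub hu0) (sin_pi_ub ht0)
            (sin_pi_nonneg ht0 (by linarith)) (by positivity)
      _ = π^2*(|x-y| * (tOf m x + tOf m y)) := by ring

lemma coord_grad (m : Fin 4) {x : ℝ} (hx1 : IqL m ≤ x) (hx2 : x ≤ IqL m + 1/4) :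
    4 * tOf m x ≤ |sin (2*π*x)| := by
  have h := abs_sin_add m hx1 hx2 hx1 hx2
  rw [show π*(x+x) = 2*π*x by ring] at h
  rw [h]
  have ht0 := tOf_nonneg m hx1 hx2
  have ht1 := tOf_le m hx1 hx2
  calc 4 * tOf m x = 2*(tOf m x + tOf m x) := by ring
    _ ≤ sin (π*(tOf m x + tOf m x)) := sin_pi_lb (by linarith) (by linarith)

/-- projection killing coordinate `i`, into sup-metric pi space -/
noncomputable def Pm {d : ℕ} (i : Fin d) (ξ : EuclideanSpace ℝ (Fin d)) : Fin d → ℝ :=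
  fun j => if j = i then 0 else ξ j

lemma eucl_coord_le {d : ℕ} (ξ η : EuclideanSpace ℝ (Fin d)) (j : Fin d) :
    |ξ j - η j| ≤ dist ξ η := by
  rw [EuclideanSpace.dist_eq, ← Real.sqrt_sq_eq_abs]
  simp only [Real.dist_eq, sq_abs]
  apply Real.sqrt_le_sqrt
  exact Finset.single_le_sum (f := fun j => (ξ j - η j)^2)
    (fun j _ => sq_nonneg _) (Finset.mem_univ j)

lemma eucl_dist_le {d : ℕ} (ξ η : EuclideanSpace ℝ (Fin d)) {c : ℝ} (hc : 0 ≤ c)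
    (h : ∀ j, |ξ j - η j| ≤ c) : dist ξ η ≤ Real.sqrt d * c := by
  rw [EuclideanSpace.dist_eq]
  simp only [Real.dist_eq, sq_abs]
  have : ∑ j, (ξ j - η j)^2 ≤ (d : ℝ) * c^2 := by
    calc ∑ j, (ξ j - η j)^2 ≤ ∑ _j : Fin d, c^2 := by
          apply Finset.sum_le_sum
          intro j _
          rw [← sq_abs]
          exact pow_le_pow_left₀ (abs_nonneg _) (h j) 2
      _ = (d : ℝ) * c^2 := by
          rw [Finset.sum_const, Finset.card_univ, Fintype.card_fin, nsmul_eq_mul]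
  calc Real.sqrt (∑ j, (ξ j - η j)^2) ≤ Real.sqrt ((d:ℝ) * c^2) := Real.sqrt_le_sqrt this
    _ = Real.sqrt d * c := by
        rw [Real.sqrt_mul (by positivity), Real.sqrt_sq hc]

lemma graph_bound {d : ℕ} (hd : 2 ≤ d) (i : Fin d) (S : Set (EuclideanSpace ℝ (Fin d)))
    {K : ℝ} (hK : 0 ≤ K)
    (hlip : ∀ ξ ∈ S, ∀ η ∈ S, dist ξ η ≤ K * dist (Pm i ξ) (Pm i η))
    (p : EuclideanSpace ℝ (Fin d)) {r : ℝ} (hr : 0 ≤ r)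
    (hball : S ⊆ Metric.closedBall p r) :
    μH[(d:ℝ)-1] S ≤ ENNReal.ofReal (K^(d-1) * (2*r)^(d-1)) := by
  classical
  have hs : (0:ℝ) ≤ (d:ℝ) - 1 := by
    have : (2:ℝ) ≤ (d:ℝ) := by exact_mod_cast hd
    linarith
  set K' : ℝ≥0 := ⟨K, hK⟩ with hK'
  -- injectivity of the projection on S
  have hinj : Set.InjOn (Pm i) S := by
    intro ξ hξ η hη he
    have h1 := hlip ξ hξ η hη
    rw [he] at h1
    simp at h1
    exact h1
  set g := Function.invFunOn (Pm i) S with hg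
  have hgS : g '' (Pm i '' S) = S := hinj.invFunOn_image Set.Subset.rfl
  have hglip : LipschitzOnWith K' g (Pm i '' S) := by
    apply LipschitzOnWith.of_dist_le_mul
    rintro a ⟨ξ, hξ, rfl⟩ b ⟨η, hη, rfl⟩
    have h1 : g (Pm i ξ) ∈ S := Function.invFunOn_mem ⟨ξ, hξ, rfl⟩
    have h2 : g (Pm i η) ∈ S := Function.invFunOn_mem ⟨η, hη, rfl⟩
    have e1 : Pm i (g (Pm i ξ)) = Pm i ξ := Function.invFunOn_eq ⟨ξ, hξ, rfl⟩
    have e2 : Pm i (g (Pm i η)) = Pm i η := Function.invFunOn_eq ⟨η, hη, rfl⟩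
    calc dist (g (Pm i ξ)) (g (Pm i η)) ≤ K * dist (Pm i (g (Pm i ξ))) (Pm i (g (Pm i η))) :=
          hlip _ h1 _ h2
      _ = K' * dist (Pm i ξ) (Pm i η) := by rw [e1, e2]; rfl
  have step1 : μH[(d:ℝ)-1] S ≤ (K' : ℝ≥0∞) ^ ((d:ℝ)-1) * μH[(d:ℝ)-1] (Pm i '' S) := by
    conv_lhs => rw [← hgS]
    exact hglip.hausdorffMeasure_image_le hs
  -- the projected set sits in a (d-1)-dimensional ball
  set ι' := {j : Fin d // j ≠ i}
  set ext : (ι' → ℝ) → (Fin d → ℝ) := fun y j => if h : j = i then 0 else y ⟨j, h⟩ with hext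
  have hextlip : LipschitzWith 1 ext := by
    apply LipschitzWith.of_dist_le_mul
    intro y y'
    rw [NNReal.coe_one, one_mul]
    refine (dist_pi_le_iff dist_nonneg).2 fun j => ?_
    by_cases h : j = i
    · simp [hext, h, dist_nonneg]
    · simpa [hext, h] using dist_le_pi_dist y y' ⟨j, h⟩
  have himg : Pm i '' S ⊆ ext '' (Metric.closedBall (fun j : ι' => p j.1) r) := by
    rintro a ⟨ξ, hξ, rfl⟩
    refine ⟨fun j : ι' => ξ j.1, ?_, ?_⟩
    · rw [Metric.mem_closedBall]
      refine (dist_pi_le_iff hr).2 fun j => ?_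
      rw [Real.dist_eq]
      exact (eucl_coord_le ξ p j.1).trans (Metric.mem_closedBall.mp (hball hξ))
    · funext j
      by_cases h : j = i <;> simp [hext, Pm, h]
  have hcard : Fintype.card ι' = d - 1 := by
    simp [ι', Fintype.card_subtype_compl]
  have hsd : (d:ℝ) - 1 = ((d - 1 : ℕ) : ℝ) := by
    have h1 : (1:ℕ) ≤ d := by omega
    push_cast [Nat.cast_sub h1]
    ring
  have step2 : μH[(d:ℝ)-1] (Pm i '' S) ≤ ENNReal.ofReal ((2*r)^(d-1)) := by
    calc μH[(d:ℝ)-1] (Pm i '' S)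
        ≤ μH[(d:ℝ)-1] (ext '' (Metric.closedBall (fun j : ι' => p j.1) r)) :=
          measure_mono himg
      _ ≤ (1 : ℝ≥0∞) ^ ((d:ℝ)-1) * μH[(d:ℝ)-1] (Metric.closedBall (fun j : ι' => p j.1) r) :=
          by simpa using hextlip.hausdorffMeasure_image_le hs _
      _ = μH[(d:ℝ)-1] (Metric.closedBall (fun j : ι' => p j.1) r) := by
          rw [ENNReal.one_rpow, one_mul]
      _ = ENNReal.ofReal ((2*r)^(d-1)) := by
          rw [hsd, ← hcard]
          rw [show ((Fintype.card ι' : ℕ) : ℝ) = (Fintype.card ι' : ℝ) from rfl]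
          rw [MeasureTheory.hausdorffMeasure_pi_real]
          rw [Real.volume_pi_closedBall _ hr, hcard]
  calc μH[(d:ℝ)-1] S ≤ (K' : ℝ≥0∞) ^ ((d:ℝ)-1) * μH[(d:ℝ)-1] (Pm i '' S) := step1
    _ ≤ (K' : ℝ≥0∞) ^ ((d:ℝ)-1) * ENNReal.ofReal ((2*r)^(d-1)) := by
        exact mul_le_mul_right step2 _
    _ = ENNReal.ofReal (K^(d-1) * (2*r)^(d-1)) := by
        rw [hsd, ENNReal.rpow_natCast, ENNReal.ofReal_mul (by positivity),
          ENNReal.ofReal_pow hK, ENNReal.ofReal_eq_coe_nnreal hK]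
        rfl
/-- A graph-like piece of the level set. -/
def piece (d : ℕ) (lam : ℝ) (i : Fin d) (q : Fin d → Fin 4) :
    Set (EuclideanSpace ℝ (Fin d)) :=
  {ξ | h0E ξ = lam ∧ (∀ j, IqL (q j) ≤ ξ j ∧ ξ j ≤ IqL (q j) + 1/4) ∧
       ∀ j, tOf (q j) (ξ j) ≤ tOf (q i) (ξ i)}

lemma cover (d : ℕ) (hd : 1 ≤ d) (lam : ℝ) :
    Mlevel d lam ⊆ ⋃ pr : Fin d × (Fin d → Fin 4), piece d lam pr.1 pr.2 := by
  classical
  intro ξ hξ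
  set q : Fin d → Fin 4 := fun j =>
    if ξ j < -(1/4) then 0 else if ξ j < 0 then 1 else if ξ j < 1/4 then 2 else 3 with hq
  have hmem : ∀ j, IqL (q j) ≤ ξ j ∧ ξ j ≤ IqL (q j) + 1/4 := by
    intro j
    obtain ⟨hb1, hb2⟩ := hξ.1 j
    by_cases h1 : ξ j < -(1/4)
    · simp only [hq, h1, if_pos, IqL]; constructor <;> linarith
    · by_cases h2 : ξ j < 0
      · simp only [hq, h1, h2, if_neg, if_pos, if_true, if_false, IqL]
        norm_num; constructor <;> linarith
      · by_cases h3 : ξ j < 1/4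
        · simp only [hq, h1, h2, h3, if_neg, if_pos, if_true, if_false, IqL]
          norm_num; constructor <;> linarith
        · simp only [hq, h1, h2, h3, if_neg, if_false, IqL]
          norm_num; constructor <;> linarith
  haveI : Nonempty (Fin d) := ⟨⟨0, by omega⟩⟩
  obtain ⟨i, _, hi⟩ := Finset.exists_max_image Finset.univ
    (fun j => tOf (q j) (ξ j)) Finset.univ_nonempty
  exact Set.mem_iUnion.2 ⟨(i, q), hξ.2, hmem, fun j => hi j (Finset.mem_univ j)⟩

/-- the Lipschitz constant of the pieces -/
noncomputable def Kd (d : ℕ) : ℝ := Real.sqrt d * (π^2/4 * d + 1)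

lemma Kd_nonneg (d : ℕ) : 0 ≤ Kd d := by
  simp only [Kd]
  have h1 : (0:ℝ) ≤ π^2/4 * d + 1 := by positivity
  exact mul_nonneg (Real.sqrt_nonneg _) h1

lemma piece_lip {d : ℕ} {lam : ℝ} {i : Fin d} {q : Fin d → Fin 4}
    {ξ η : EuclideanSpace ℝ (Fin d)} (hξ : ξ ∈ piece d lam i q) (hη : η ∈ piece d lam i q) :
    dist ξ η ≤ Kd d * dist (Pm i ξ) (Pm i η) := by
  classical
  obtain ⟨hξl, hξq, hξm⟩ := hξ
  obtain ⟨hηl, hηq, hηm⟩ := hη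
  have hsum : ∑ j, Real.sin (π * ξ j)^2 = ∑ j, Real.sin (π * η j)^2 := by
    have h1 : h0E ξ = h0E η := by rw [hξl, hηl]
    simp only [h0E] at h1; linarith
  set D := dist (Pm i ξ) (Pm i η) with hD
  have hD0 : 0 ≤ D := dist_nonneg
  have hDj : ∀ j, j ≠ i → |ξ j - η j| ≤ D := by
    intro j hj
    have h1 := dist_le_pi_dist (Pm i ξ) (Pm i η) j
    simpa [Pm, hj, Real.dist_eq] using h1
  -- the key coordinate estimate
  have key : |ξ i - η i| ≤ π^2/4 * ∑ j ∈ Finset.univ.erase i, |ξ j - η j| := by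
    rcases eq_or_lt_of_le (by
        have := tOf_nonneg (q i) (hξq i).1 (hξq i).2
        have := tOf_nonneg (q i) (hηq i).1 (hηq i).2
        linarith : (0:ℝ) ≤ tOf (q i) (ξ i) + tOf (q i) (η i)) with h0 | h0
    · -- degenerate case: both points are the corner
      have hz : ∀ j, ξ j = η j := by
        intro j
        have hξ0 : tOf (q j) (ξ j) = 0 := le_antisymm
          (by have := hξm j; have := tOf_nonneg (q i) (hηq i).1 (hηq i).2; linarith)
          (tOf_nonneg (q j) (hξq j).1 (hξq j).2)
        have hη0 : tOf (q j) (η j) = 0 := le_antisymm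
          (by have := hηm j; have := tOf_nonneg (q i) (hξq i).1 (hξq i).2; linarith)
          (tOf_nonneg (q j) (hηq j).1 (hηq j).2)
        exact tOf_inj (q j) (hξ0.trans hη0.symm)
      rw [hz i, sub_self, abs_zero]
      have : 0 ≤ ∑ j ∈ Finset.univ.erase i, |ξ j - η j| :=
        Finset.sum_nonneg fun j _ => abs_nonneg _
      nlinarith [Real.pi_pos]
    · -- main case
      have hsplit : Real.sin (π * ξ i)^2 - Real.sin (π * η i)^2 =
          ∑ j ∈ Finset.univ.erase i, (Real.sin (π * η j)^2 - Real.sin (π * ξ j)^2) := by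
        have h1 := Finset.add_sum_erase Finset.univ (fun j => Real.sin (π * ξ j)^2)
          (Finset.mem_univ i)
        have h2 := Finset.add_sum_erase Finset.univ (fun j => Real.sin (π * η j)^2)
          (Finset.mem_univ i)
        rw [Finset.sum_sub_distrib]
        simp only at h1 h2
        linarith [hsum]
      have hlow := (coord_est (q i) (hξq i).1 (hξq i).2 (hηq i).1 (hηq i).2).1
      have hup : |∑ j ∈ Finset.univ.erase i, (Real.sin (π * η j)^2 - Real.sin (π * ξ j)^2)|
          ≤ π^2 * ((tOf (q i) (ξ i) + tOf (q i) (η i)) *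
            ∑ j ∈ Finset.univ.erase i, |ξ j - η j|) := by
        calc |∑ j ∈ Finset.univ.erase i, (Real.sin (π * η j)^2 - Real.sin (π * ξ j)^2)|
            ≤ ∑ j ∈ Finset.univ.erase i, |Real.sin (π * η j)^2 - Real.sin (π * ξ j)^2| :=
              Finset.abs_sum_le_sum_abs _ _
          _ ≤ ∑ j ∈ Finset.univ.erase i,
                π^2 * ((tOf (q i) (ξ i) + tOf (q i) (η i)) * |ξ j - η j|) := by
              apply Finset.sum_le_sum
              intro j _
              rw [abs_sub_comm]
              have h3 := (coord_est (q j) (hξq j).1 (hξq j).2 (hηq j).1 (hηq j).2).2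
              have h4 : tOf (q j) (ξ j) + tOf (q j) (η j)
                  ≤ tOf (q i) (ξ i) + tOf (q i) (η i) := by
                have := hξm j; have := hηm j; linarith
              calc |Real.sin (π * ξ j)^2 - Real.sin (π * η j)^2|
                  ≤ π^2*(|ξ j - η j| * (tOf (q j) (ξ j) + tOf (q j) (η j))) := h3
                _ ≤ π^2 * ((tOf (q i) (ξ i) + tOf (q i) (η i)) * |ξ j - η j|) := by
                    have h5 : |ξ j - η j| * (tOf (q j) (ξ j) + tOf (q j) (η j))
                        ≤ |ξ j - η j| * (tOf (q i) (ξ i) + tOf (q i) (η i)) :=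
                      mul_le_mul_of_nonneg_left h4 (abs_nonneg _)
                    nlinarith [Real.pi_pos]
          _ = π^2 * ((tOf (q i) (ξ i) + tOf (q i) (η i)) *
                ∑ j ∈ Finset.univ.erase i, |ξ j - η j|) := by
              rw [Finset.mul_sum, Finset.mul_sum]
      rw [hsplit] at hlow
      have h6 : 4 * (|ξ i - η i| * (tOf (q i) (ξ i) + tOf (q i) (η i)))
          ≤ π^2 * ((tOf (q i) (ξ i) + tOf (q i) (η i)) *
            ∑ j ∈ Finset.univ.erase i, |ξ j - η j|) :=
        le_trans hlow hup
      have h7 := mul_pos (by linarith [Real.pi_pos] : (0:ℝ) < 4) h0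
      nlinarith [h0, abs_nonneg (ξ i - η i)]
  -- conclude with the Euclidean distance bound
  have hcard : (Finset.univ.erase i).card ≤ d := by
    calc (Finset.univ.erase i).card ≤ Finset.univ.card := Finset.card_erase_le.trans le_rfl
      _ = d := by simp
  have hsumD : ∑ j ∈ Finset.univ.erase i, |ξ j - η j| ≤ (d:ℝ) * D := by
    calc ∑ j ∈ Finset.univ.erase i, |ξ j - η j| ≤ ∑ _j ∈ Finset.univ.erase i, D :=
          Finset.sum_le_sum fun j hj => hDj j (Finset.ne_of_mem_erase hj)
      _ = (Finset.univ.erase i).card * D := by rw [Finset.sum_const, nsmul_eq_mul]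
      _ ≤ (d:ℝ) * D := by
          apply mul_le_mul_of_nonneg_right _ hD0
          exact_mod_cast hcard
  have hall : ∀ j, |ξ j - η j| ≤ (π^2/4 * d + 1) * D := by
    intro j
    by_cases hj : j = i
    · subst hj
      calc |ξ j - η j| ≤ π^2/4 * ((d:ℝ) * D) := by
            refine key.trans ?_
            have := Real.pi_pos
            apply mul_le_mul_of_nonneg_left hsumD (by positivity)
        _ ≤ (π^2/4 * d + 1) * D := by nlinarith [Real.pi_pos]
    · calc |ξ j - η j| ≤ D := hDj j hj
        _ ≤ (π^2/4 * d + 1) * D := by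
            have h8 : (0:ℝ) ≤ π^2/4 * d * D := by positivity
            nlinarith
  calc dist ξ η ≤ Real.sqrt d * ((π^2/4 * d + 1) * D) := by
        apply eucl_dist_le ξ η _ hall
        have := Real.pi_pos; positivity
    _ = Kd d * D := by simp only [Kd]; ring
lemma dyadic {r : ℝ} (h0 : 0 < r) (h1 : r ≤ 1) :
    ∃ n : ℕ, (2⁻¹:ℝ)^(n+1) < r ∧ r ≤ (2⁻¹:ℝ)^n := by
  classical
  have hex : ∃ m : ℕ, (2⁻¹:ℝ)^m < r := exists_pow_lt_of_lt_one h0 (by norm_num)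
  have hspec := Nat.find_spec hex
  by_cases hz : Nat.find hex = 0
  · rw [hz] at hspec; norm_num at hspec; linarith
  · obtain ⟨n, hn⟩ := Nat.exists_eq_succ_of_ne_zero hz
    rw [hn] at hspec
    refine ⟨n, hspec, ?_⟩
    have hmin := Nat.find_min hex (show n < Nat.find hex by omega)
    exact not_lt.mp hmin

lemma haus_null_of_finite {d : ℕ} (hd : 3 ≤ d) {A : Set (EuclideanSpace ℝ (Fin d))}
    (hA : A.Finite) : μH[(d:ℝ)-1] A = 0 := by
  have hsd : (d:ℝ) - 1 = (((d - 1 : ℕ) : ℝ≥0) : ℝ) := by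
    have h1 : (1:ℕ) ≤ d := by omega
    rw [show (((d - 1 : ℕ) : ℝ≥0) : ℝ) = ((d - 1 : ℕ) : ℝ) from NNReal.coe_natCast _,
      Nat.cast_sub h1]
    push_cast
    ring
  rw [hsd]
  apply hausdorffMeasure_of_dimH_lt
  rw [dimH_finite hA]
  have : 0 < d - 1 := by omega
  exact_mod_cast this

lemma grad_coord_lb {d : ℕ} {i : Fin d} {q : Fin d → Fin 4}
    {ξ : EuclideanSpace ℝ (Fin d)} (hq : ∀ j, IqL (q j) ≤ ξ j ∧ ξ j ≤ IqL (q j) + 1/4) :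
    8 * π * tOf (q i) (ξ i) ≤ ‖gradh0 ξ‖ := by
  have h1 : |(gradh0 ξ) i| ≤ ‖gradh0 ξ‖ := by
    have h2 := eucl_coord_le (gradh0 ξ) 0 i
    simpa [dist_zero_right] using h2
  have h3 : (gradh0 ξ) i = 2 * π * Real.sin (2 * π * ξ i) := rfl
  have h4 := coord_grad (q i) (hq i).1 (hq i).2
  have h5 : |(gradh0 ξ) i| = 2 * π * |Real.sin (2 * π * ξ i)| := by
    rw [h3, abs_mul, abs_of_nonneg (by positivity : (0:ℝ) ≤ 2 * π)]
  nlinarith [Real.pi_pos, abs_nonneg (Real.sin (2 * π * ξ i))]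

lemma piece_integral {d : ℕ} (hd : 3 ≤ d) (lam : ℝ) (i : Fin d) (q : Fin d → Fin 4) :
    (∫⁻ ξ in piece d lam i q, (ENNReal.ofReal ‖gradh0 ξ‖)⁻¹ ∂(μH[(d : ℝ) - 1])) < ⊤ := by
  classical
  set S := piece d lam i q with hS
  set cpt : EuclideanSpace ℝ (Fin d) := WithLp.toLp 2 (fun j => czero (q j)) with hcpt
  -- the dyadic decomposition
  set B : ℕ → Set (EuclideanSpace ℝ (Fin d)) := fun n =>
    match n with
    | 0 => S ∩ {ξ | tOf (q i) (ξ i) = 0}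
    | n+1 => S ∩ {ξ | 4⁻¹*(2⁻¹:ℝ)^(n+1) < tOf (q i) (ξ i) ∧ tOf (q i) (ξ i) ≤ 4⁻¹*(2⁻¹:ℝ)^n}
    with hB
  have hcover : S ⊆ ⋃ n, B n := by
    intro ξ hξ
    have hbox := hξ.2.1
    have ht0 := tOf_nonneg (q i) (hbox i).1 (hbox i).2
    have ht1 := tOf_le (q i) (hbox i).1 (hbox i).2
    rcases eq_or_lt_of_le ht0 with h0 | h0
    · exact Set.mem_iUnion.2 ⟨0, hξ, h0.symm⟩
    · obtain ⟨n, hn1, hn2⟩ := dyadic (by linarith : (0:ℝ) < 4 * tOf (q i) (ξ i))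
        (by linarith)
      exact Set.mem_iUnion.2 ⟨n+1, hξ, by constructor <;> [linarith; linarith]⟩
  -- distance from the corner
  have hcorner : ∀ ξ ∈ S, ∀ {c : ℝ}, 0 ≤ c → tOf (q i) (ξ i) ≤ c →
      ξ ∈ Metric.closedBall cpt (Real.sqrt d * c) := by
    intro ξ hξ c hc htc
    rw [Metric.mem_closedBall]
    apply eucl_dist_le ξ cpt hc
    intro j
    have hbox := hξ.2.1
    rw [show cpt j = czero (q j) from rfl, abs_sub_czero (q j) (hbox j).1 (hbox j).2]
    exact le_trans (hξ.2.2 j) htc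
  -- measure bound for annuli
  have hmeas : ∀ n : ℕ, μH[(d : ℝ) - 1] (B (n+1)) ≤
      ENNReal.ofReal (Kd d^(d-1) * (2*(Real.sqrt d * (4⁻¹*(2⁻¹:ℝ)^n)))^(d-1)) := by
    intro n
    apply graph_bound (by omega) i _ (Kd_nonneg d)
      (fun ξ hξ η hη => piece_lip hξ.1 hη.1) cpt
      (by positivity)
    intro ξ hξ
    exact hcorner ξ hξ.1 (by positivity) hξ.2.2
  -- integrand bound on annuli
  have hint : ∀ n : ℕ, ∀ ξ ∈ B (n+1),
      (ENNReal.ofReal ‖gradh0 ξ‖)⁻¹ ≤ (ENNReal.ofReal (2*π*(4⁻¹*(2⁻¹:ℝ)^n)))⁻¹ := by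
    intro n ξ hξ
    apply ENNReal.inv_le_inv.2
    apply ENNReal.ofReal_le_ofReal
    have h1 := grad_coord_lb (i := i) hξ.1.2.1
    have h2 := hξ.2.1
    rw [pow_succ] at h2
    have hp : (0:ℝ) < (2⁻¹:ℝ)^n := by positivity
    nlinarith [Real.pi_pos]
  -- the constant
  set CB : ℝ := (2*π*4⁻¹)⁻¹ * (Kd d^(d-1) * (2*(Real.sqrt d * 4⁻¹))^(d-1)) * 2 with hCB
  have hCB0 : 0 ≤ CB := by
    have := Kd_nonneg d; have := Real.pi_pos; have := Real.sqrt_nonneg (d:ℝ)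
    positivity
  -- per-annulus integral bound
  have hann : ∀ n : ℕ, (∫⁻ ξ in B (n+1), (ENNReal.ofReal ‖gradh0 ξ‖)⁻¹ ∂(μH[(d : ℝ) - 1]))
      ≤ ENNReal.ofReal CB * (ENNReal.ofReal 2⁻¹)^(n+1) := by
    intro n
    have step1 : (∫⁻ ξ in B (n+1), (ENNReal.ofReal ‖gradh0 ξ‖)⁻¹ ∂(μH[(d : ℝ) - 1]))
        ≤ (ENNReal.ofReal (2*π*(4⁻¹*(2⁻¹:ℝ)^n)))⁻¹ * μH[(d : ℝ) - 1] (B (n+1)) := by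
      calc (∫⁻ ξ in B (n+1), (ENNReal.ofReal ‖gradh0 ξ‖)⁻¹ ∂(μH[(d : ℝ) - 1]))
          ≤ ∫⁻ _ξ in B (n+1), (ENNReal.ofReal (2*π*(4⁻¹*(2⁻¹:ℝ)^n)))⁻¹ ∂(μH[(d : ℝ) - 1]) :=
            setLIntegral_mono measurable_const (hint n)
        _ = (ENNReal.ofReal (2*π*(4⁻¹*(2⁻¹:ℝ)^n)))⁻¹ * μH[(d : ℝ) - 1] (B (n+1)) :=
            setLIntegral_const _ _
    refine step1.trans ?_
    have hpos : (0:ℝ) < 2*π*(4⁻¹*(2⁻¹:ℝ)^n) := by positivity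
    calc (ENNReal.ofReal (2*π*(4⁻¹*(2⁻¹:ℝ)^n)))⁻¹ * μH[(d : ℝ) - 1] (B (n+1))
        ≤ (ENNReal.ofReal (2*π*(4⁻¹*(2⁻¹:ℝ)^n)))⁻¹ *
          ENNReal.ofReal (Kd d^(d-1) * (2*(Real.sqrt d * (4⁻¹*(2⁻¹:ℝ)^n)))^(d-1)) :=
          mul_le_mul_right (hmeas n) _
      _ = ENNReal.ofReal ((2*π*(4⁻¹*(2⁻¹:ℝ)^n))⁻¹ *
          (Kd d^(d-1) * (2*(Real.sqrt d * (4⁻¹*(2⁻¹:ℝ)^n)))^(d-1))) := by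
          rw [← ENNReal.ofReal_inv_of_pos hpos,
            ← ENNReal.ofReal_mul (by positivity : (0:ℝ) ≤ (2*π*(4⁻¹*(2⁻¹:ℝ)^n))⁻¹)]
      _ ≤ ENNReal.ofReal (CB * (2⁻¹:ℝ)^(n+1)) := by
          apply ENNReal.ofReal_le_ofReal
          -- the real computation
          have hK := Kd_nonneg d
          have hsq := Real.sqrt_nonneg (d:ℝ)
          have hpi := Real.pi_pos
          have e1 : (2*(Real.sqrt d * (4⁻¹*(2⁻¹:ℝ)^n)))^(d-1)
              = (2*(Real.sqrt d * 4⁻¹))^(d-1) * ((2⁻¹:ℝ)^n)^(d-1) := by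
            rw [← mul_pow]; congr 1; ring
          have e2 : (2*π*(4⁻¹*(2⁻¹:ℝ)^n))⁻¹ = (2*π*4⁻¹)⁻¹ * ((2:ℝ))^n := by
            rw [show 2*π*(4⁻¹*(2⁻¹:ℝ)^n) = (2*π*4⁻¹) * (2⁻¹:ℝ)^n by ring]
            rw [mul_inv, inv_pow, inv_inv]
          rw [e1, e2, hCB]
          have key : (2:ℝ)^n * ((2⁻¹:ℝ)^n)^(d-1) ≤ 2 * (2⁻¹:ℝ)^(n+1) := by
            have h3 : ((2⁻¹:ℝ)^n)^(d-1) = (2⁻¹:ℝ)^(n*(d-1)) := by rw [← pow_mul]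
            have h4 : (2⁻¹:ℝ)^(n*(d-1)) ≤ (2⁻¹:ℝ)^(2*n) :=
              pow_le_pow_of_le_one (by norm_num) (by norm_num)
                (by
                  have h2d : 2 ≤ d - 1 := by omega
                  calc 2*n = n*2 := by ring
                    _ ≤ n*(d-1) := Nat.mul_le_mul_left n h2d)
            have h5 : (2:ℝ)^n * (2⁻¹:ℝ)^(2*n) = (2⁻¹:ℝ)^n := by
              rw [two_mul, pow_add]
              rw [show (2:ℝ)^n * ((2⁻¹:ℝ)^n * (2⁻¹:ℝ)^n) = ((2:ℝ)*2⁻¹)^n * (2⁻¹:ℝ)^n by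
                rw [mul_pow]; ring]
              norm_num
            have h6 : (2:ℝ)^n * ((2⁻¹:ℝ)^n)^(d-1) ≤ (2⁻¹:ℝ)^n := by
              rw [h3]
              calc (2:ℝ)^n * (2⁻¹:ℝ)^(n*(d-1)) ≤ (2:ℝ)^n * (2⁻¹:ℝ)^(2*n) := by
                    apply mul_le_mul_of_nonneg_left h4 (by positivity)
                _ = (2⁻¹:ℝ)^n := h5
            calc (2:ℝ)^n * ((2⁻¹:ℝ)^n)^(d-1) ≤ (2⁻¹:ℝ)^n := h6
              _ = 2 * (2⁻¹:ℝ)^(n+1) := by rw [pow_succ]; ring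
          calc (2*π*4⁻¹)⁻¹ * (2:ℝ)^n *
                (Kd d^(d-1) * ((2*(Real.sqrt d * 4⁻¹))^(d-1) * ((2⁻¹:ℝ)^n)^(d-1)))
              = ((2*π*4⁻¹)⁻¹ * (Kd d^(d-1) * (2*(Real.sqrt d * 4⁻¹))^(d-1))) *
                ((2:ℝ)^n * ((2⁻¹:ℝ)^n)^(d-1)) := by ring
            _ ≤ ((2*π*4⁻¹)⁻¹ * (Kd d^(d-1) * (2*(Real.sqrt d * 4⁻¹))^(d-1))) *
                (2 * (2⁻¹:ℝ)^(n+1)) := by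
                apply mul_le_mul_of_nonneg_left key (by positivity)
            _ = (2*π*4⁻¹)⁻¹ * (Kd d^(d-1) * (2*(Real.sqrt d * 4⁻¹))^(d-1)) * 2 *
                (2⁻¹:ℝ)^(n+1) := by ring
      _ = ENNReal.ofReal CB * (ENNReal.ofReal 2⁻¹)^(n+1) := by
          rw [ENNReal.ofReal_mul hCB0, ENNReal.ofReal_pow (by norm_num)]
  -- B 0 is null
  have hB0 : μH[(d : ℝ) - 1] (B 0) = 0 := by
    refine measure_mono_null ?_ (haus_null_of_finite hd (Set.finite_singleton cpt))
    · intro ξ hξ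
      have hbox := hξ.1.2.1
      have hz : ∀ j, ξ j = czero (q j) := by
        intro j
        have h1 : tOf (q j) (ξ j) = 0 := le_antisymm
          (by rw [← hξ.2]; exact hξ.1.2.2 j)
          (tOf_nonneg (q j) (hbox j).1 (hbox j).2)
        have h2 := abs_sub_czero (q j) (hbox j).1 (hbox j).2
        rw [h1, abs_eq_zero] at h2
        linarith [h2]
      have : ξ = cpt := PiLp.ext hz
      simp [this]
  -- sum up
  calc (∫⁻ ξ in S, (ENNReal.ofReal ‖gradh0 ξ‖)⁻¹ ∂(μH[(d : ℝ) - 1]))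
      ≤ ∫⁻ ξ in ⋃ n, B n, (ENNReal.ofReal ‖gradh0 ξ‖)⁻¹ ∂(μH[(d : ℝ) - 1]) :=
        lintegral_mono_set hcover
    _ ≤ ∑' n, ∫⁻ ξ in B n, (ENNReal.ofReal ‖gradh0 ξ‖)⁻¹ ∂(μH[(d : ℝ) - 1]) :=
        lintegral_iUnion_le _ _
    _ ≤ ∑' n, ENNReal.ofReal CB * (ENNReal.ofReal 2⁻¹)^n := by
        apply ENNReal.tsum_le_tsum
        intro n
        match n with
        | 0 =>
          rw [setLIntegral_measure_zero _ _ hB0]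
          exact zero_le
        | n+1 => exact hann n
    _ = ENNReal.ofReal CB * ∑' n, (ENNReal.ofReal 2⁻¹)^n := ENNReal.tsum_mul_left
    _ < ⊤ := by
        rw [ENNReal.tsum_geometric]
        apply ENNReal.mul_lt_top ENNReal.ofReal_lt_top
        have h1 : ENNReal.ofReal 2⁻¹ = 2⁻¹ := by
          rw [ENNReal.ofReal_inv_of_pos (by norm_num)]
          norm_num
        rw [h1]
        rw [ENNReal.one_sub_inv_two]
        simp
theorem statement10 (d k : ℕ) (hd : 3 ≤ d) (hk1 : 1 ≤ k) (hkd : k ≤ d - 1)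
    (lam : ℝ) (hlam : lam = 4 * k) :
    (∫⁻ ξ in Mlevel d lam, (ENNReal.ofReal ‖gradh0 ξ‖)⁻¹ ∂(μH[(d : ℝ) - 1])) < ⊤ ∧
    (SigmaLevel d lam).Finite ∧
    μH[(d : ℝ) - 1] (SigmaLevel d lam) = 0 ∧
    (∫⁻ ξ in SigmaLevel d lam, (ENNReal.ofReal ‖gradh0 ξ‖)⁻¹ ∂(μH[(d : ℝ) - 1])) = 0 := by
  have hsub : SigmaLevel d lam ⊆
      (WithLp.ofLp ⁻¹' Set.pi Set.univ (fun _ : Fin d => ({-(1/2), 0} : Set ℝ)) :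
        Set (EuclideanSpace ℝ (Fin d))) := by
    rintro ξ ⟨⟨hbox, _⟩, hgrad⟩
    refine Set.mem_univ_pi.2 fun j => ?_
    have h1 : (2:ℝ) * π * Real.sin (2 * π * ξ j) = 0 := congrFun (congrArg WithLp.ofLp hgrad) j
    have h2 : Real.sin (2 * π * ξ j) = 0 := by
      have hpi := Real.pi_ne_zero
      rcases mul_eq_zero.mp h1 with h | h
      · exact absurd h (by positivity)
      · exact h
    obtain ⟨n, hn⟩ := Real.sin_eq_zero_iff.mp h2
    have h3 : (n:ℝ) = 2 * ξ j := by
      have h5 : (n:ℝ) * π = (2 * ξ j) * π := by rw [hn]; ring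
      exact mul_right_cancel₀ Real.pi_ne_zero h5
    obtain ⟨hb1, hb2⟩ := hbox j
    have h4a : (-1 : ℤ) ≤ n :=
      by exact_mod_cast (by push_cast [h3]; linarith : ((-1:ℤ):ℝ) ≤ (n:ℝ))
    have h4b : n < 1 :=
      by exact_mod_cast (by push_cast [h3]; linarith : (n:ℝ) < ((1:ℤ):ℝ))
    interval_cases n
    · have : ξ j = -(1/2) := by
        have : ((-1:ℤ):ℝ) = 2 * ξ j := h3
        push_cast at this
        linarith
      simp [this]
    · have : ξ j = 0 := by
        have : ((0:ℤ):ℝ) = 2 * ξ j := h3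
        push_cast at this
        linarith
      simp [this]
  have hfin : (SigmaLevel d lam).Finite :=
    Set.Finite.subset (Set.Finite.preimage (WithLp.ofLp_injective 2).injOn (Set.Finite.pi fun _ =>
      (Set.finite_singleton (0:ℝ)).insert (-(1/2)))) hsub
  have hnull : μH[(d : ℝ) - 1] (SigmaLevel d lam) = 0 := haus_null_of_finite hd hfin
  refine ⟨?_, hfin, hnull, setLIntegral_measure_zero _ _ hnull⟩
  calc (∫⁻ ξ in Mlevel d lam, (ENNReal.ofReal ‖gradh0 ξ‖)⁻¹ ∂(μH[(d : ℝ) - 1]))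
      ≤ ∫⁻ ξ in ⋃ pr : Fin d × (Fin d → Fin 4), piece d lam pr.1 pr.2,
          (ENNReal.ofReal ‖gradh0 ξ‖)⁻¹ ∂(μH[(d : ℝ) - 1]) :=
        lintegral_mono_set (cover d (by omega) lam)
    _ ≤ ∑' pr : Fin d × (Fin d → Fin 4),
          ∫⁻ ξ in piece d lam pr.1 pr.2, (ENNReal.ofReal ‖gradh0 ξ‖)⁻¹ ∂(μH[(d : ℝ) - 1]) :=
        lintegral_iUnion_le _ _
    _ < ⊤ := by
        rw [tsum_fintype]
        exact ENNReal.sum_lt_top.mpr fun pr _ => piece_integral hd lam pr.1 pr.2
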